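/- Let G be a group acting freely on a ℤⁿ-tree with regular length function, and let A be an abelian subgroup all of whose elements are cyclically reduced. If s, t ∈ A satisfy l(s) = l(t), then s = t or s = t⁻¹. -/

import Mathlib

variable {Λ X G : Type*}

/-- `d` is a `Λ`-metric on `X` (`Λ` an ordered abelian group). -/
structure IsLambdaMetric [AddCommGroup Λ] [LinearOrder Λ] [IsOrderedAddMonoid Λ] (d : X → X → Λ) : Prop where
  nonneg : ∀ x y, 0 ≤ d x y
  eq_zero_iff : ∀ x y, d x y = 0 ↔ x = y
  symm : ∀ x y, d x y = d y x
  triangle : ∀ x y z, d x z ≤ d x y + d y z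

/-- `S` is a segment with endpoints `x`, `y` in the `Λ`-metric space `(X, d)`:
the image of an isometry `α` from a closed interval `[a,b] ⊆ Λ`. -/
def IsSegment [AddCommGroup Λ] [LinearOrder Λ] [IsOrderedAddMonoid Λ] (d : X → X → Λ) (S : Set X) (x y : X) : Prop :=
  ∃ (a b : Λ) (α : Λ → X), a ≤ b ∧ α a = x ∧ α b = y ∧
    (∀ s ∈ Set.Icc a b, ∀ t ∈ Set.Icc a b, d (α s) (α t) = |s - t|) ∧
    S = α '' Set.Icc a b

/-- `(X, d)` is a `Λ`-tree: a geodesic `Λ`-metric space in which (T2) the union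
of two segments meeting in a single common endpoint is a segment, and (T3) the
intersection of two segments with a common endpoint is a segment. -/
structure IsLambdaTree [AddCommGroup Λ] [LinearOrder Λ] [IsOrderedAddMonoid Λ] (d : X → X → Λ) : Prop where
  metric : IsLambdaMetric d
  geodesic : ∀ x y : X, ∃ S : Set X, IsSegment d S x y
  union_seg : ∀ (S₁ S₂ : Set X) (x y p : X), IsSegment d S₁ p x → IsSegment d S₂ p y →
      S₁ ∩ S₂ = {p} → IsSegment d (S₁ ∪ S₂) x y
  inter_seg : ∀ (S₁ S₂ : Set X) (x y z : X), IsSegment d S₁ x y → IsSegment d S₂ x z →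
      ∃ w : X, IsSegment d (S₁ ∩ S₂) x w


/-- `ℤⁿ` with the lexicographic order, as a linearly ordered abelian group. -/
noncomputable instance ZnLex.instLinearOrderedAddCommGroup (n : ℕ) :
    IsOrderedAddMonoid (Lex (Fin n → ℤ)) :=
  inferInstance

section Seg
variable [AddCommGroup Λ] [LinearOrder Λ] [IsOrderedAddMonoid Λ] {d : X → X → Λ} {S : Set X} {x y : X}

lemma abs_sub_of_le {a b : Λ} (h : a ≤ b) : |a - b| = b - a := by
  rw [abs_sub_comm, abs_of_nonneg (sub_nonneg.mpr h)]


lemma add_self_le_add_self {a b : Λ} (h : a + a ≤ b + b) : a ≤ b := by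
  by_contra hc
  exact absurd h (not_le.mpr (add_lt_add (not_le.mp hc) (not_le.mp hc)))

lemma le_max_or {a b c : Λ} (h : a ≤ max b c) : a ≤ b ∨ a ≤ c := by
  rcases le_total b c with h' | h'
  · rw [max_eq_right h'] at h; exact Or.inr h
  · rw [max_eq_left h'] at h; exact Or.inl h

lemma nonpos_add_le_left' {a b : Λ} (h : b + a ≤ b) : a ≤ 0 :=
  (add_le_iff_nonpos_right _).mp h

lemma nonpos_add_le_right' {a b : Λ} (h : a + b ≤ b) : a ≤ 0 := by
  rw [add_comm] at h; exact (add_le_iff_nonpos_right _).mp h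

lemma IsSegment.mem_left (h : IsSegment d S x y) : x ∈ S := by
  obtain ⟨a, b, α, hab, hxa, hyb, hi, hS⟩ := h
  exact hS ▸ ⟨a, ⟨le_refl a, hab⟩, hxa⟩

lemma IsSegment.mem_right (h : IsSegment d S x y) : y ∈ S := by
  obtain ⟨a, b, α, hab, hxa, hyb, hi, hS⟩ := h
  exact hS ▸ ⟨b, ⟨hab, le_refl b⟩, hyb⟩

lemma IsSegment.dist_left {z : X} (h : IsSegment d S x y) (hz : z ∈ S) :
    d x z + d z y = d x y := by
  obtain ⟨a, b, α, hab, hxa, hyb, hi, hS⟩ := h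
  subst hS
  obtain ⟨c, hc, rfl⟩ := hz
  have h1 : d x (α c) = c - a := by
    rw [← hxa, hi a ⟨le_refl a, hab⟩ c hc, abs_sub_of_le hc.1]
  have h2 : d (α c) y = b - c := by
    rw [← hyb, hi c hc b ⟨hab, le_refl b⟩, abs_sub_of_le hc.2]
  have h3 : d x y = b - a := by
    rw [← hxa, ← hyb, hi a ⟨le_refl a, hab⟩ b ⟨hab, le_refl b⟩, abs_sub_of_le hab]
  rw [h1, h2, h3]; abel

lemma IsSegment.dist_pair {z₁ z₂ : X} (h : IsSegment d S x y) (h₁ : z₁ ∈ S) (h₂ : z₂ ∈ S) :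
    d z₁ z₂ = |d x z₁ - d x z₂| := by
  obtain ⟨a, b, α, hab, hxa, hyb, hi, hS⟩ := h
  subst hS
  obtain ⟨c₁, hc₁, rfl⟩ := h₁
  obtain ⟨c₂, hc₂, rfl⟩ := h₂
  have e1 : d x (α c₁) = c₁ - a := by
    rw [← hxa, hi a ⟨le_refl a, hab⟩ c₁ hc₁, abs_sub_of_le hc₁.1]
  have e2 : d x (α c₂) = c₂ - a := by
    rw [← hxa, hi a ⟨le_refl a, hab⟩ c₂ hc₂, abs_sub_of_le hc₂.1]
  rw [e1, e2, hi c₁ hc₁ c₂ hc₂, sub_sub_sub_cancel_right]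

/-- the Y-point lemma: for a segment `S` from `p` to `q` and any point `r`,
there is `w ∈ S` lying between `p,q`, between `p,r` and between `q,r`. -/
lemma y_point {d : X → X → Λ} (h : IsLambdaTree d) {S : Set X} {p q : X}
    (hS : IsSegment d S p q) (r : X) :
    ∃ w ∈ S, d p w + d w q = d p q ∧ d p w + d w r = d p r ∧ d q w + d w r = d q r := by
  obtain ⟨S₂, hS₂⟩ := h.geodesic p r
  obtain ⟨w, hw⟩ := h.inter_seg S S₂ p q r hS hS₂
  have hwmem : w ∈ S ∩ S₂ := hw.mem_right
  refine ⟨w, hwmem.1, hS.dist_left hwmem.1, hS₂.dist_left hwmem.2, ?_⟩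
  -- build subsegments [w,q] ⊆ S and [w,r] ⊆ S₂
  obtain ⟨a, b, α, hab, hpa, hqb, hi, hSeq⟩ := hS
  obtain ⟨a₂, b₂, β, hab₂, hpa₂, hrb₂, hi₂, hSeq₂⟩ := hS₂
  obtain ⟨c, hc, hcw⟩ : ∃ c ∈ Set.Icc a b, α c = w := by
    have := hwmem.1; rw [hSeq] at this; exact this
  obtain ⟨c₂, hc₂, hcw₂⟩ : ∃ c₂ ∈ Set.Icc a₂ b₂, β c₂ = w := by
    have := hwmem.2; rw [hSeq₂] at this; exact this
  have hT₁ : IsSegment d (α '' Set.Icc c b) w q :=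
    ⟨c, b, α, hc.2, hcw, hqb, fun u hu v hv =>
      hi u ⟨le_trans hc.1 hu.1, hu.2⟩ v ⟨le_trans hc.1 hv.1, hv.2⟩, rfl⟩
  have hT₂ : IsSegment d (β '' Set.Icc c₂ b₂) w r :=
    ⟨c₂, b₂, β, hc₂.2, hcw₂, hrb₂, fun u hu v hv =>
      hi₂ u ⟨le_trans hc₂.1 hu.1, hu.2⟩ v ⟨le_trans hc₂.1 hv.1, hv.2⟩, rfl⟩
  have hsub₁ : α '' Set.Icc c b ⊆ S := by
    rw [hSeq]; exact Set.image_mono (Set.Icc_subset_Icc hc.1 le_rfl)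
  have hsub₂ : β '' Set.Icc c₂ b₂ ⊆ S₂ := by
    rw [hSeq₂]; exact Set.image_mono (Set.Icc_subset_Icc hc₂.1 le_rfl)
  have hint : (α '' Set.Icc c b) ∩ (β '' Set.Icc c₂ b₂) = {w} := by
    apply Set.eq_singleton_iff_unique_mem.mpr
    constructor
    · exact ⟨hT₁.mem_left, hT₂.mem_left⟩
    · rintro z ⟨hz₁, hz₂⟩
      have hzS : z ∈ S ∩ S₂ := ⟨hsub₁ hz₁, hsub₂ hz₂⟩
      -- z between p and w in the segment S ∩ S₂
      have hbet := hw.dist_left hzS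
      obtain ⟨e, he, rfl⟩ := hz₁
      have he' : e ∈ Set.Icc a b := ⟨le_trans hc.1 he.1, he.2⟩
      have h1 : d p (α e) = e - a := by
        rw [← hpa, hi a ⟨le_refl a, hab⟩ e he', abs_sub_of_le he'.1]
      have h2 : d (α e) w = e - c := by
        rw [← hcw, hi e he' c hc, abs_of_nonneg (sub_nonneg.mpr he.1)]
      have h3 : d p w = c - a := by
        rw [← hpa, ← hcw, hi a ⟨le_refl a, hab⟩ c hc, abs_sub_of_le hc.1]
      rw [h1, h2, h3] at hbet
      have hec : e = c := by
        have h5 : (c - a) + (e - c) ≤ (e - a) + (e - c) :=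
          add_le_add_left (sub_le_sub_right he.1 a) _
        rw [hbet] at h5
        exact le_antisymm (sub_nonpos.mp ((add_le_iff_nonpos_right _).mp h5)) he.1
      rw [hec, hcw]
  have huni := h.union_seg _ _ q r w hT₁ hT₂ hint
  exact huni.dist_left (Set.mem_union_left _ hT₁.mem_left)

end Seg

section FourPoint
variable [AddCommGroup Λ] [LinearOrder Λ] [IsOrderedAddMonoid Λ]

/-- 0-hyperbolicity: the four point condition in a `Λ`-tree. -/
lemma four_point {d : X → X → Λ} (h : IsLambdaTree d) (p q r s : X) :
    d p q + d r s ≤ max (d p r + d q s) (d p s + d q r) := by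
  obtain ⟨S, hS⟩ := h.geodesic p q
  obtain ⟨w₁, hw₁S, hw₁q, hw₁r, hw₁qr⟩ := y_point h hS r
  obtain ⟨w₂, hw₂S, hw₂q, hw₂s, hw₂qs⟩ := y_point h hS s
  have hm := h.metric
  have hpair := hS.dist_pair hw₁S hw₂S
  have htri : d r s ≤ d r w₁ + (d w₁ w₂ + d w₂ s) :=
    le_trans (hm.triangle r w₁ s) (add_le_add_right (hm.triangle w₁ w₂ s) _)
  rcases le_total (d p w₁) (d p w₂) with hc | hc
  · refine le_trans ?_ (le_max_right _ _)
    have hd12 : d w₁ w₂ = d p w₂ - d p w₁ := by rw [hpair, abs_sub_of_le hc]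
    have e1 : d w₁ r = d q r - d q w₁ := eq_sub_of_add_eq' hw₁qr
    have e2 : d q w₁ = d p q - d p w₁ := by
      rw [hm.symm q w₁]; exact eq_sub_of_add_eq' hw₁q
    have e3 : d w₂ s = d p s - d p w₂ := eq_sub_of_add_eq' hw₂s
    calc d p q + d r s ≤ d p q + (d r w₁ + (d w₁ w₂ + d w₂ s)) := add_le_add_right htri _
      _ = d p s + d q r := by rw [hm.symm r w₁, e1, e2, e3, hd12]; abel
  · refine le_trans ?_ (le_max_left _ _)
    have hd12 : d w₁ w₂ = d p w₁ - d p w₂ := by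
      rw [hpair, abs_sub_comm, abs_sub_of_le hc]
    have e1 : d w₁ r = d p r - d p w₁ := eq_sub_of_add_eq' hw₁r
    have e3 : d w₂ s = d q s - d q w₂ := eq_sub_of_add_eq' hw₂qs
    have e2 : d q w₂ = d p q - d p w₂ := by
      rw [hm.symm q w₂]; exact eq_sub_of_add_eq' hw₂q
    calc d p q + d r s ≤ d p q + (d r w₁ + (d w₁ w₂ + d w₂ s)) := add_le_add_right htri _
      _ = d p r + d q s := by rw [hm.symm r w₁, e1, e3, e2, hd12]; abel

end FourPoint

/-- let `G` act freely by isometries on a `ℤⁿ`-tree with base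
point `x` and regular based length function `l g = d x (g • x)`, and let `A` be
an abelian subgroup all of whose nontrivial elements are cyclically reduced
(`l a = lT a`).  If `s, t ∈ A` have equal lengths then `s = t` or `s = t⁻¹`. -/
theorem eq_or_eq_inv_of_length_eq {n : ℕ} {G : Type*} [Group G] [MulAction G X]
    (d : X → X → Lex (Fin n → ℤ))
    (htree : IsLambdaTree d)
    (hiso : ∀ (g : G) (x y : X), d (g • x) (g • y) = d x y)
    (hfree : ∀ g : G, g ≠ 1 → (∀ t : X, g • t ≠ t) ∧ ∀ t : X, (g * g) • t ≠ t)
    (x : X)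
    (lT : G → Lex (Fin n → ℤ))
    (hlT : ∀ g : G, (∃ t : X, d t (g • t) = lT g) ∧ ∀ t : X, lT g ≤ d t (g • t))
    (hreg : ∀ g f : G, ∃ u g₁ f₁ : G,
      g = u * g₁ ∧ d x (g • x) = d x (u • x) + d x (g₁ • x) ∧
      f = u * f₁ ∧ d x (f • x) = d x (u • x) + d x (f₁ • x) ∧
      2 • d x (u • x) = d x (g • x) + d x (f • x) - d x ((g⁻¹ * f) • x))
    (A : Subgroup G) (hab : ∀ a ∈ A, ∀ b ∈ A, a * b = b * a)
    (hcyc : ∀ a ∈ A, a ≠ 1 → d x (a • x) = lT a)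
    (s t : G) (hsA : s ∈ A) (htA : t ∈ A)
    (hlen : d x (s • x) = d x (t • x)) :
    s = t ∨ s = t⁻¹ := by
  have hm := htree.metric
  have ldist : ∀ g f : G, d (g • x) (f • x) = d x ((g⁻¹ * f) • x) := by
    intro g f
    have h1 := hiso g⁻¹ (g • x) (f • x)
    rw [inv_smul_smul, ← mul_smul] at h1
    exact h1.symm
  have linv : ∀ g : G, d x (g⁻¹ • x) = d x (g • x) := by
    intro g
    have h1 := hiso g x (g⁻¹ • x)
    rw [smul_inv_smul] at h1
    rw [← h1, hm.symm]
  have lone : ∀ g : G, d x (g • x) ≤ 0 → g = 1 := by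
    intro g hg
    by_contra hne
    exact (hfree g hne).1 x
      ((hm.eq_zero_iff x (g • x)).mp (le_antisymm hg (hm.nonneg _ _))).symm
  -- Lemma A: cyclically reduced elements of A satisfy l(g²) = 2 l(g)
  have lemA : ∀ g : G, g ∈ A → g ≠ 1 →
      d x ((g * g) • x) = d x (g • x) + d x (g • x) := by
    intro g hgA hg
    obtain ⟨u, g₁, f₁, hgu, hadd1, hgu2, hadd2, hprod⟩ := hreg g g⁻¹
    have hUnn : (0 : Lex (Fin n → ℤ)) ≤ d x (u • x) := hm.nonneg _ _
    have key := four_point htree (u • x) ((g * u) • x) x (g • x)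
    have d1 : d (u • x) x = d x (u • x) := hm.symm _ _
    have d2 : d ((g * u) • x) (g • x) = d x (u • x) := by
      rw [ldist, show (g * u)⁻¹ * g = u⁻¹ by group, linv]
    have d3 : d (u • x) (g • x) = d x (g₁ • x) := by
      rw [ldist, show u⁻¹ * g = g₁ by rw [hgu]; group]
    have d4 : d ((g * u) • x) x = d x (f₁ • x) := by
      have hf : g * u = f₁⁻¹ := by
        have : u⁻¹ * g⁻¹ = f₁ := by rw [hgu2]; group
        rw [← this]; group
      rw [hm.symm, hf, linv]
    rw [d1, d2, d3, d4] at key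
    have hlow : d x (g • x) ≤ d (u • x) ((g * u) • x) := by
      rw [mul_smul, hcyc g hgA hg]
      exact (hlT g).2 (u • x)
    have key2 := le_trans (add_le_add_left hlow (d x (g • x))) key
    rcases le_max_or key2 with hca | hcb
    · -- impossible: would give g² = 1
      exfalso
      have hUL : d x (u • x) ≤ d x (g • x) :=
        hadd1 ▸ le_add_of_nonneg_right (hm.nonneg _ _)
      have hLU : d x (g • x) ≤ d x (u • x) := add_self_le_add_self hca
      have hG1 : d x (g₁ • x) ≤ 0 := by
        have h5 : d x (u • x) + d x (g₁ • x) ≤ d x (u • x) + 0 := by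
          rw [add_zero, ← hadd1]; exact hLU.antisymm hUL ▸ le_rfl
        exact le_of_add_le_add_left h5
      have hF1 : d x (f₁ • x) ≤ 0 := by
        have h6 : d x (u • x) + d x (f₁ • x) = d x (g • x) := by
          rw [← hadd2, linv]
        have h5 : d x (u • x) + d x (f₁ • x) ≤ d x (u • x) + 0 := by
          rw [add_zero, h6]; exact hLU
        exact le_of_add_le_add_left h5
      have hg1 : g₁ = 1 := lone _ hG1
      have hf1 : f₁ = 1 := lone _ hF1
      have hgg : g * g = 1 := by
        have e1 : g = u := by rw [hgu, hg1, mul_one]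
        have e2 : g⁻¹ = u := by rw [hgu2, hf1, mul_one]
        rw [← e2] at e1
        exact mul_eq_one_iff_eq_inv.mpr e1
      exact (hfree g hg).2 x (by rw [hgg, one_smul])
    · -- the overlap has length 0
      have hG1 : d x (g₁ • x) = d x (g • x) - d x (u • x) := eq_sub_of_add_eq' hadd1.symm
      have hF1 : d x (f₁ • x) = d x (g • x) - d x (u • x) := by
        have h6 : d x (g • x) = d x (u • x) + d x (f₁ • x) := by rw [← hadd2, linv]
        exact eq_sub_of_add_eq' h6.symm
      rw [hG1, hF1] at hcb
      have hUU : d x (u • x) + d x (u • x) ≤ 0 := by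
        have h7 := add_le_add_left hcb (d x (u • x) + d x (u • x))
        have h8 : d x (g • x) - d x (u • x) + (d x (g • x) - d x (u • x)) +
            (d x (u • x) + d x (u • x)) = d x (g • x) + d x (g • x) := by abel
        rw [h8] at h7
        exact nonpos_add_le_left' h7
      have hU0 : d x (u • x) = 0 :=
        le_antisymm (add_self_le_add_self (b := 0) (by rw [add_zero]; exact hUU)) hUnn
      have hprod' : (0 : Lex (Fin n → ℤ)) =
          d x (g • x) + d x (g • x) - d x ((g * g) • x) := by
        have e1 : g⁻¹ * g⁻¹ = (g * g)⁻¹ := (mul_inv_rev g g).symm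
        rw [hU0, nsmul_zero] at hprod
        rw [hprod, linv, e1, linv]
      exact (sub_eq_zero.mp hprod'.symm).symm
  -- trivial cases
  by_cases hs1 : s = 1
  · have ht1 : t = 1 := by
      apply lone
      rw [← hlen, hs1, one_smul]
      exact le_of_eq ((hm.eq_zero_iff x x).mpr rfl)
    exact Or.inl (by rw [hs1, ht1])
  by_cases ht1 : t = 1
  · have hs1' : s = 1 := by
      apply lone
      rw [hlen, ht1, one_smul]
      exact le_of_eq ((hm.eq_zero_iff x x).mpr rfl)
    exact Or.inl (by rw [hs1', ht1])
  -- main case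
  have C : s * t = t * s := hab s hsA t htA
  have Cc : Commute s t := C
  have h2t : d x ((t * t) • x) = d x (t • x) + d x (t • x) := lemA t htA ht1
  have step3 := four_point htree (s • x) x (t • x) (t⁻¹ • x)
  have e1 : d (s • x) x = d x (t • x) := by rw [hm.symm, hlen]
  have e2 : d (t • x) (t⁻¹ • x) = d x (t • x) + d x (t • x) := by
    rw [ldist, show t⁻¹ * t⁻¹ = (t * t)⁻¹ from (mul_inv_rev t t).symm, linv, h2t]
  have e3 : d (s • x) (t • x) = d x ((s⁻¹ * t) • x) := ldist s t
  have e4 : d x (t⁻¹ • x) = d x (t • x) := linv t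
  have e5 : d (s • x) (t⁻¹ • x) = d x ((s⁻¹ * t⁻¹) • x) := ldist s t⁻¹
  rw [e1, e2, e3, e4, e5] at step3
  rcases le_max_or step3 with h1 | h2
  · -- s and t in opposite directions: s = t⁻¹
    right
    have h1' : d x (t • x) + d x (t • x) ≤ d x ((s⁻¹ * t) • x) := by
      have := h1
      rw [show d x (t • x) + (d x (t • x) + d x (t • x)) =
        (d x (t • x) + d x (t • x)) + d x (t • x) from by abel] at this
      exact (add_le_add_iff_right _).mp this
    have heq : d (s • x) (t • x) = d x (t • x) + d x (t • x) := by
      refine le_antisymm ?_ (e3 ▸ h1')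
      calc d (s • x) (t • x) ≤ d (s • x) x + d x (t • x) := hm.triangle _ _ _
        _ = d x (t • x) + d x (t • x) := by rw [e1]
    have key := four_point htree ((t * s) • x) x (s • x) (t • x)
    have f1 : d ((t * s) • x) x = d x ((t * s) • x) := hm.symm _ _
    have f2 : d ((t * s) • x) (s • x) = d x (t • x) := by
      have hg : (t * s)⁻¹ * s = t⁻¹ := by
        calc (t * s)⁻¹ * s = s⁻¹ * (t⁻¹ * s) := by rw [mul_inv_rev, mul_assoc]
          _ = s⁻¹ * (s * t⁻¹) := by rw [← Cc.inv_right.eq]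
          _ = t⁻¹ := inv_mul_cancel_left s t⁻¹
      rw [ldist, hg, linv]
    have f3 : d ((t * s) • x) (t • x) = d x (t • x) := by
      rw [ldist, show (t * s)⁻¹ * t = s⁻¹ by group, linv, hlen]
    have f4 : d x (s • x) = d x (t • x) := hlen
    rw [f1, heq, f2, f3, f4] at key
    have hE : d x ((t * s) • x) ≤ 0 := by
      rcases le_max_or key with k | k
      · exact nonpos_add_le_right' k
      · exact nonpos_add_le_right' k
    exact eq_inv_of_mul_eq_one_right (lone _ hE)
  · -- s and t in the same direction: s = t
    left
    have h2' : d x (t • x) + d x (t • x) ≤ d x ((s⁻¹ * t⁻¹) • x) := by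
      have := h2
      rw [show d x (t • x) + (d x (t • x) + d x (t • x)) =
        (d x (t • x) + d x (t • x)) + d x (t • x) from by abel] at this
      exact (add_le_add_iff_right _).mp this
    have heq : d (s • x) (t⁻¹ • x) = d x (t • x) + d x (t • x) := by
      refine le_antisymm ?_ (e5 ▸ h2')
      calc d (s • x) (t⁻¹ • x) ≤ d (s • x) x + d x (t⁻¹ • x) := hm.triangle _ _ _
        _ = d x (t • x) + d x (t • x) := by rw [e1, e4]
    have key := four_point htree ((t⁻¹ * s) • x) x (s • x) (t⁻¹ • x)
    have f1 : d ((t⁻¹ * s) • x) x = d x ((t⁻¹ * s) • x) := hm.symm _ _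
    have f2 : d ((t⁻¹ * s) • x) (s • x) = d x (t • x) := by
      have hg : (t⁻¹ * s)⁻¹ * s = t := by
        calc (t⁻¹ * s)⁻¹ * s = s⁻¹ * (t * s) := by rw [mul_inv_rev, inv_inv, mul_assoc]
          _ = s⁻¹ * (s * t) := by rw [← C]
          _ = t := inv_mul_cancel_left s t
      rw [ldist, hg]
    have f3 : d ((t⁻¹ * s) • x) (t⁻¹ • x) = d x (t • x) := by
      rw [ldist, show (t⁻¹ * s)⁻¹ * t⁻¹ = s⁻¹ by group, linv, hlen]
    have f4 : d x (s • x) = d x (t • x) := hlen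
    rw [f1, heq, f2, f3, e4, f4] at key
    have hE : d x ((t⁻¹ * s) • x) ≤ 0 := by
      rcases le_max_or key with k | k
      · exact nonpos_add_le_right' k
      · exact nonpos_add_le_right' k
    have := eq_inv_of_mul_eq_one_right (lone _ hE)
    rwa [inv_inv] at this
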